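/- For every ε > 0 and every Δ ≥ 1 there exists c > 0 such that for every η > 0 there exists n₀ with the following property: for all n ≥ n₀ and every connected graph G on vertex set {1,…,n} with maximum degree at most Δ, if R ~ G(n, ε/n) and G* = G ∪ R, then with probability at least 1 − η the graph G* contains a path with at least c·n edges. -/

import Mathlib

open Real

/-- The Erdős–Rényi measure `G(n,p)`: the probability that the random graph lies in the
set `A` of graphs on `{1,…,n}`. -/
noncomputable def erProb (n : ℕ) (p : ℝ) (A : Set (SimpleGraph (Fin n))) : ℝ :=
  ∑ R : SimpleGraph (Fin n),
    A.indicator (fun R => p ^ R.edgeSet.ncard * (1 - p) ^ (n.choose 2 - R.edgeSet.ncard)) R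

namespace LPP
open Finset SimpleGraph

attribute [local instance] Classical.propDecidable

open Finset SimpleGraph

attribute [local instance] Classical.propDecidable

variable {n : ℕ}

def U (n : ℕ) : Finset (Sym2 (Fin n)) := Finset.univ.filter (fun e => ¬ e.IsDiag)

lemma card_U : (U n).card = n.choose 2 := by
  rw [U, ← Fintype.card_subtype, Sym2.card_subtype_not_diag, Fintype.card_fin]

noncomputable def eF (R : SimpleGraph (Fin n)) : Finset (Sym2 (Fin n)) := (Set.toFinite R.edgeSet).toFinset

lemma eF_mem (R : SimpleGraph (Fin n)) : eF R ∈ (U n).powerset := by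
  rw [Finset.mem_powerset]
  intro e he
  rw [eF, Set.Finite.mem_toFinset] at he
  simp only [U, Finset.mem_filter, Finset.mem_univ, true_and]
  exact R.not_isDiag_of_mem_edgeSet he

lemma from_eF (R : SimpleGraph (Fin n)) : fromEdgeSet (↑(eF R)) = R := by
  rw [eF, Set.Finite.coe_toFinset, fromEdgeSet_edgeSet]

lemma edgeSet_from {s : Finset (Sym2 (Fin n))} (hs : s ∈ (U n).powerset) :
    (fromEdgeSet (↑s : Set (Sym2 (Fin n)))).edgeSet = ↑s := by
  rw [edgeSet_fromEdgeSet]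
  rw [Finset.mem_powerset] at hs
  ext e
  simp only [Set.mem_diff, Finset.mem_coe, Set.mem_setOf_eq, and_iff_left_iff_imp]
  intro he
  have := hs he
  simp only [U, Finset.mem_filter] at this
  exact this.2

lemma eF_from {s : Finset (Sym2 (Fin n))} (hs : s ∈ (U n).powerset) :
    eF (fromEdgeSet (↑s : Set (Sym2 (Fin n)))) = s := by
  ext e
  rw [eF, Set.Finite.mem_toFinset, edgeSet_from hs, Finset.mem_coe]

lemma ncard_from {s : Finset (Sym2 (Fin n))} (hs : s ∈ (U n).powerset) :
    (fromEdgeSet (↑s : Set (Sym2 (Fin n)))).edgeSet.ncard = s.card := by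
  rw [edgeSet_from hs, Set.ncard_coe_finset]

lemma sum_graphs_eq (F : SimpleGraph (Fin n) → ℝ) :
    ∑ R : SimpleGraph (Fin n), F R
      = ∑ s ∈ (U n).powerset, F (fromEdgeSet (↑s : Set (Sym2 (Fin n)))) := by
  refine Finset.sum_nbij' (i := fun R => eF R)
    (j := fun s => fromEdgeSet (↑s : Set (Sym2 (Fin n)))) ?_ ?_ ?_ ?_ ?_
  · intro a _; exact eF_mem a
  · intro s _; exact Finset.mem_univ _
  · intro a _; exact from_eF a
  · intro s hs; exact eF_from hs
  · intro a _; rw [from_eF]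

lemma erProb_eq (p : ℝ) (A : Set (SimpleGraph (Fin n))) :
    erProb n p A = ∑ s ∈ (U n).powerset,
      (if fromEdgeSet (↑s : Set (Sym2 (Fin n))) ∈ A then
        p ^ s.card * (1 - p) ^ (n.choose 2 - s.card) else 0) := by
  rw [erProb, sum_graphs_eq]
  refine Finset.sum_congr rfl fun s hs => ?_
  rw [Set.indicator_apply, ncard_from hs]

lemma binom_sum {α : Type*} [DecidableEq α] (T : Finset α) (p : ℝ) :
    ∑ s ∈ T.powerset, p ^ s.card * (1 - p) ^ (T.card - s.card) = 1 := by
  have h := Finset.prod_add (fun _ : α => p) (fun _ => 1 - p) T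
  simp only [Finset.prod_const] at h
  have he : ∀ s ∈ T.powerset,
      p ^ s.card * (1 - p) ^ (T.card - s.card)
        = p ^ s.card * (1 - p) ^ (T \ s).card := by
    intro s hs
    rw [Finset.mem_powerset] at hs
    rw [Finset.card_sdiff_of_subset hs]
  rw [Finset.sum_congr rfl he, ← h]
  simp

lemma erProb_univ (p : ℝ) : erProb n p Set.univ = 1 := by
  rw [erProb_eq]
  simp only [Set.mem_univ, if_true]
  have := binom_sum (U n) p
  rwa [card_U] at this

lemma erProb_nonneg {p : ℝ} (h0 : 0 ≤ p) (h1 : p ≤ 1) (A : Set (SimpleGraph (Fin n))) :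
    0 ≤ erProb n p A := by
  apply Finset.sum_nonneg
  intro R _
  apply Set.indicator_nonneg
  intro a _
  exact mul_nonneg (pow_nonneg h0 _) (pow_nonneg (by linarith) _)

lemma erProb_mono {p : ℝ} (h0 : 0 ≤ p) (h1 : p ≤ 1) {A B : Set (SimpleGraph (Fin n))}
    (hAB : A ⊆ B) : erProb n p A ≤ erProb n p B := by
  apply Finset.sum_le_sum
  intro R _
  apply Set.indicator_le_indicator_of_subset hAB
  intro a; exact mul_nonneg (pow_nonneg h0 _) (pow_nonneg (by linarith) _)

lemma erProb_compl (p : ℝ) (A : Set (SimpleGraph (Fin n))) :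
    erProb n p Aᶜ = 1 - erProb n p A := by
  have : erProb n p A + erProb n p Aᶜ = 1 := by
    rw [← erProb_univ (n := n) p, erProb, erProb, erProb, ← Finset.sum_add_distrib]
    refine Finset.sum_congr rfl fun R _ => ?_
    by_cases h : R ∈ A
    · rw [Set.indicator_of_mem h, Set.indicator_of_notMem (by simp [h]),
        Set.indicator_of_mem (Set.mem_univ _), add_zero]
    · rw [Set.indicator_of_notMem h, Set.indicator_of_mem (by simp [h]),
        Set.indicator_of_mem (Set.mem_univ _), zero_add]
  linarith

lemma erProb_union_le {ι : Type*} {p : ℝ} (h0 : 0 ≤ p) (h1 : p ≤ 1)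
    (Q : Finset ι) (E : ι → Set (SimpleGraph (Fin n))) :
    erProb n p {R | ∃ q ∈ Q, R ∈ E q} ≤ ∑ q ∈ Q, erProb n p (E q) := by
  unfold erProb
  rw [Finset.sum_comm]
  apply Finset.sum_le_sum
  intro R _
  set w := fun R : SimpleGraph (Fin n) =>
    p ^ R.edgeSet.ncard * (1 - p) ^ (n.choose 2 - R.edgeSet.ncard) with hw
  have hwnn : ∀ S : SimpleGraph (Fin n), 0 ≤ w S := fun S =>
    mul_nonneg (pow_nonneg h0 _) (pow_nonneg (by linarith) _)
  by_cases h : R ∈ {R | ∃ q ∈ Q, R ∈ E q}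
  · obtain ⟨q, hqQ, hq⟩ := h
    rw [Set.indicator_of_mem (by exact ⟨q, hqQ, hq⟩)]
    calc w R = (E q).indicator w R := by rw [Set.indicator_of_mem hq]
    _ ≤ ∑ q ∈ Q, (E q).indicator w R := by
        apply Finset.single_le_sum (f := fun q => (E q).indicator w R) ?_ hqQ
        intro i _
        exact Set.indicator_nonneg (fun a _ => hwnn a) R
  · rw [Set.indicator_of_notMem h]
    apply Finset.sum_nonneg
    intro i _
    exact Set.indicator_nonneg (fun a _ => hwnn a) R

lemma erProb_avoid {p : ℝ} (h0 : 0 ≤ p) (h1 : p ≤ 1) {F : Finset (Sym2 (Fin n))}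
    (hF : F ⊆ U n) :
    erProb n p {R | ∀ e ∈ F, e ∉ R.edgeSet} ≤ (1 - p) ^ F.card := by
  have hq : (0:ℝ) ≤ 1 - p := by linarith
  rw [erProb_eq]
  refine le_trans (b := ∑ s ∈ (U n).powerset,
        (if s ∈ ((U n) \ F).powerset then
          p ^ s.card * (1 - p) ^ (n.choose 2 - s.card) else 0))
      (Finset.sum_le_sum fun s hs => ?_) ?_
  · by_cases h : fromEdgeSet (↑s : Set (Sym2 (Fin n))) ∈ {R | ∀ e ∈ F, e ∉ R.edgeSet}
    · have h2 : s ∈ ((U n) \ F).powerset := by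
        rw [Finset.mem_powerset] at hs ⊢
        intro e he
        rw [Finset.mem_sdiff]
        refine ⟨hs he, fun heF => ?_⟩
        exact h e heF (by rw [edgeSet_from (Finset.mem_powerset.2 hs)]; exact he)
      rw [if_pos h, if_pos h2]
    · rw [if_neg h]
      split_ifs with h2
      · exact mul_nonneg (pow_nonneg h0 _) (pow_nonneg hq _)
      · exact le_rfl
  rw [Finset.sum_ite_mem, Finset.inter_eq_right.2 (Finset.powerset_mono.2 Finset.sdiff_subset)]
  have hcard : ∀ s ∈ ((U n) \ F).powerset,
      p ^ s.card * (1 - p) ^ (n.choose 2 - s.card)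
        = (1 - p) ^ F.card * (p ^ s.card * (1 - p) ^ (((U n) \ F).card - s.card)) := by
    intro s hs
    rw [Finset.mem_powerset] at hs
    have h1' : s.card ≤ ((U n) \ F).card := Finset.card_le_card hs
    have h2' : ((U n) \ F).card = (U n).card - F.card := Finset.card_sdiff_of_subset hF
    have h3' : n.choose 2 - s.card = F.card + (((U n) \ F).card - s.card) := by
      rw [← card_U (n := n)]
      have := Finset.card_le_card hF
      omega
    rw [h3', pow_add]
    ring
  rw [Finset.sum_congr rfl hcard, ← Finset.mul_sum, binom_sum, mul_one]


variable {n : ℕ} (G : SimpleGraph (Fin n))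

/-- `a` is reachable from ... within vertex set `W`. -/
def reachIn (W : Finset (Fin n)) (a b : Fin n) : Prop :=
  ∃ w : G.Walk a b, ∀ x ∈ w.support, x ∈ W

/-- the induced graph on `P` is connected -/
def ConnIn (P : Finset (Fin n)) : Prop := ∀ a ∈ P, ∀ b ∈ P, reachIn G P a b

variable {G}

lemma reachIn_refl {W : Finset (Fin n)} {a : Fin n} (ha : a ∈ W) : reachIn G W a a :=
  ⟨SimpleGraph.Walk.nil, by simp [ha]⟩

lemma reachIn_symm {W : Finset (Fin n)} {a b : Fin n} (h : reachIn G W a b) :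
    reachIn G W b a := by
  obtain ⟨w, hw⟩ := h
  refine ⟨w.reverse, fun x hx => ?_⟩
  rw [SimpleGraph.Walk.support_reverse, List.mem_reverse] at hx
  exact hw x hx

lemma reachIn_trans {W : Finset (Fin n)} {a b c : Fin n} (h : reachIn G W a b)
    (h' : reachIn G W b c) : reachIn G W a c := by
  obtain ⟨w, hw⟩ := h; obtain ⟨w', hw'⟩ := h'
  refine ⟨w.append w', fun x hx => ?_⟩
  rw [SimpleGraph.Walk.mem_support_append_iff] at hx
  rcases hx with hx | hx
  · exact hw x hx
  · exact hw' x hx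

lemma reachIn_mono {W W' : Finset (Fin n)} (hWW : W ⊆ W') {a b : Fin n}
    (h : reachIn G W a b) : reachIn G W' a b := by
  obtain ⟨w, hw⟩ := h; exact ⟨w, fun x hx => hWW (hw x hx)⟩

lemma reachIn_of_adj {W : Finset (Fin n)} {a b : Fin n} (ha : a ∈ W) (hb : b ∈ W)
    (h : G.Adj a b) : reachIn G W a b :=
  ⟨SimpleGraph.Walk.cons h SimpleGraph.Walk.nil, by
    intro x hx; simp only [SimpleGraph.Walk.support_cons, SimpleGraph.Walk.support_nil,
      List.mem_cons, List.mem_singleton] at hx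
    rcases hx with h1 | h1 | h1
    · subst h1; exact ha
    · subst h1; exact hb
    · cases h1⟩

lemma reachIn_mem_left {W : Finset (Fin n)} {a b : Fin n} (h : reachIn G W a b) : a ∈ W := by
  obtain ⟨w, hw⟩ := h; exact hw a w.start_mem_support

lemma reachIn_mem_right {W : Finset (Fin n)} {a b : Fin n} (h : reachIn G W a b) : b ∈ W := by
  obtain ⟨w, hw⟩ := h; exact hw b w.end_mem_support

lemma reachIn_support {W : Finset (Fin n)} {a b : Fin n} (h : reachIn G W a b) :
    ∃ w : G.Walk a b, ∀ x ∈ w.support, reachIn G W a x := by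
  obtain ⟨w, hw⟩ := h
  refine ⟨w, fun x hx => ⟨w.takeUntil x hx, fun y hy => hw y (w.support_takeUntil_subset hx hy)⟩⟩

/-- connected component of `v` within `W`. -/
noncomputable def comp (G : SimpleGraph (Fin n)) (W : Finset (Fin n)) (v : Fin n) :
    Finset (Fin n) := W.filter (reachIn G W v)

lemma mem_comp {W : Finset (Fin n)} {v u : Fin n} :
    u ∈ comp G W v ↔ u ∈ W ∧ reachIn G W v u := Finset.mem_filter

lemma comp_subset {W : Finset (Fin n)} {v : Fin n} : comp G W v ⊆ W := Finset.filter_subset _ _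

lemma self_mem_comp {W : Finset (Fin n)} {v : Fin n} (hv : v ∈ W) : v ∈ comp G W v :=
  mem_comp.2 ⟨hv, reachIn_refl hv⟩

lemma reachIn_comp_of_mem {W : Finset (Fin n)} {v u : Fin n} (hu : u ∈ comp G W v) :
    reachIn G (comp G W v) v u := by
  obtain ⟨huW, hr⟩ := mem_comp.1 hu
  obtain ⟨w, hw⟩ := reachIn_support hr
  exact ⟨w, fun x hx => mem_comp.2 ⟨reachIn_mem_right (hw x hx), hw x hx⟩⟩

lemma connIn_comp {W : Finset (Fin n)} {v : Fin n} : ConnIn G (comp G W v) := by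
  intro a ha b hb
  exact reachIn_trans (reachIn_symm (reachIn_comp_of_mem ha)) (reachIn_comp_of_mem hb)

lemma comp_eq_of_mem {W : Finset (Fin n)} {v u : Fin n} (hu : u ∈ comp G W v) :
    comp G W u = comp G W v := by
  obtain ⟨huW, hr⟩ := mem_comp.1 hu
  ext y
  simp only [mem_comp]
  constructor
  · rintro ⟨hyW, hy⟩; exact ⟨hyW, reachIn_trans hr hy⟩
  · rintro ⟨hyW, hy⟩; exact ⟨hyW, reachIn_trans (reachIn_symm hr) hy⟩

lemma comp_disjoint {W : Finset (Fin n)} {v u : Fin n} (hu : u ∉ comp G W v) {y : Fin n}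
    (hy : y ∈ comp G W u) : y ∉ comp G W v := by
  intro hy2
  have h1 := comp_eq_of_mem hy
  have h2 := comp_eq_of_mem hy2
  rw [h1] at h2
  have huW : u ∈ W := reachIn_mem_left (mem_comp.1 hy).2
  exact hu (h2 ▸ self_mem_comp huW)

/-- Walking towards `r`, the last vertex before first reaching `r` is adjacent to `r`
and reachable avoiding `r`. -/
lemma exists_adj_reach {W : Finset (Fin n)} {r : Fin n} :
    ∀ {u : Fin n} (w : G.Walk u r), (∀ x ∈ w.support, x ∈ W) → u ≠ r →
    ∃ x, G.Adj x r ∧ reachIn G (W.erase r) u x := by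
  intro u w
  induction w with
  | nil => intro _ h; exact absurd rfl h
  | @cons a b c hadj q ih =>
    intro hsup hne
    have haW : a ∈ W := hsup a (by simp [SimpleGraph.Walk.support_cons])
    by_cases hb : b = c
    · subst hb
      exact ⟨a, hadj, reachIn_refl (Finset.mem_erase.2 ⟨hne, haW⟩)⟩
    · obtain ⟨x, hx1, hx2⟩ := ih (fun y hy => hsup y (by
        simp only [SimpleGraph.Walk.support_cons, List.mem_cons]; right; exact hy)) hb
      refine ⟨x, hx1, reachIn_trans (reachIn_of_adj ?_ ?_ hadj) hx2⟩
      · exact Finset.mem_erase.2 ⟨hne, haW⟩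
      · exact Finset.mem_erase.2 ⟨hb, hsup b (by
          simp only [SimpleGraph.Walk.support_cons, List.mem_cons]
          right; exact q.start_mem_support)⟩

/-- every vertex of `V.erase r` lies in the component of some neighbour of `r`. -/
lemma covering {V : Finset (Fin n)} (hV : ConnIn G V) {r : Fin n} (hr : r ∈ V) {u : Fin n}
    (hu : u ∈ V.erase r) :
    ∃ x ∈ (V.erase r).filter (fun x => G.Adj r x), u ∈ comp G (V.erase r) x := by
  obtain ⟨hune, huV⟩ := Finset.mem_erase.1 hu
  obtain ⟨w, hw⟩ := hV u huV r hr
  obtain ⟨x, hx1, hx2⟩ := exists_adj_reach w hw hune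
  have hxmem : x ∈ V.erase r := reachIn_mem_right hx2
  refine ⟨x, Finset.mem_filter.2 ⟨hxmem, hx1.symm⟩, mem_comp.2 ⟨hu, reachIn_symm hx2⟩⟩


lemma strongSplit {Δ k : ℕ} (hΔ : 1 ≤ Δ) (hk : 1 ≤ k)
    (hdeg : ∀ v : Fin n, (G.neighborSet v).ncard ≤ Δ) :
    ∀ N : ℕ, ∀ V : Finset (Fin n), V.card ≤ N → ConnIn G V → ∀ r ∈ V,
      Δ * k + 1 ≤ V.card →
      ∃ S ⊆ V.erase r, ConnIn G S ∧ k ≤ S.card ∧ S.card ≤ Δ * k ∧ ConnIn G (V \ S) := by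
  intro N
  induction N with
  | zero => intro V hV _ r hr hcard; omega
  | succ N ih =>
    intro V hVN hV r hr hcard
    set W := V.erase r with hW
    have hWcard : W.card = V.card - 1 := Finset.card_erase_of_mem hr
    set Nr := W.filter (fun x => G.Adj r x) with hNr
    have hNrΔ : Nr.card ≤ Δ := by
      have hsub : Nr ⊆ (G.neighborFinset r) := by
        intro x hx
        rw [SimpleGraph.mem_neighborFinset]
        exact (Finset.mem_filter.1 hx).2
      have := Finset.card_le_card hsub
      have hfin : (G.neighborFinset r).card = (G.neighborSet r).ncard := by
        rw [SimpleGraph.neighborFinset_def, Set.ncard_eq_toFinset_card']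
      have hd := hdeg r
      omega
    -- there is a big component
    have hbig : ∃ x ∈ Nr, k ≤ (comp G W x).card := by
      by_contra hno
      push_neg at hno
      have hWsub : W ⊆ Nr.biUnion (fun x => comp G W x) := by
        intro u hu
        obtain ⟨x, hx1, hx2⟩ := covering hV hr hu
        exact Finset.mem_biUnion.2 ⟨x, hx1, hx2⟩
      have h1 : W.card ≤ ∑ x ∈ Nr, (comp G W x).card :=
        le_trans (Finset.card_le_card hWsub) (Finset.card_biUnion_le)
      have h2 : ∑ x ∈ Nr, (comp G W x).card ≤ Nr.card * (k - 1) := by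
        rw [← smul_eq_mul]
        apply Finset.sum_le_card_nsmul
        intro x hx
        have := hno x hx
        omega
      have hmul : Nr.card * (k-1) ≤ Δ * (k-1) := Nat.mul_le_mul_right _ hNrΔ
      have hΔk : Δ * (k-1) + Δ = Δ * k := by
        rw [← Nat.mul_succ]
        congr 1
        omega
      omega
    obtain ⟨x, hxNr, hxbig⟩ := hbig
    set C := comp G W x with hC
    have hxW : x ∈ W := (Finset.mem_filter.1 hxNr).1
    have hxC : x ∈ C := self_mem_comp hxW
    have hCW : C ⊆ W := comp_subset
    have hrC : r ∉ C := fun h => (Finset.mem_erase.1 (hCW h)).1 rfl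
    have hadj_rx : G.Adj r x := (Finset.mem_filter.1 hxNr).2
    have hrVS : ∀ S : Finset (Fin n), S ⊆ C → r ∈ V \ S :=
      fun S hS => Finset.mem_sdiff.2 ⟨hr, fun h => hrC (hS h)⟩
    -- reach r avoiding a subset of C, from outside C
    have reach_out : ∀ S : Finset (Fin n), S ⊆ C → ∀ u ∈ V \ S, u ∉ C → u ≠ r →
        reachIn G (V \ S) u r := by
      intro S hSC u hu huC hur
      have huW : u ∈ W := Finset.mem_erase.2 ⟨hur, (Finset.mem_sdiff.1 hu).1⟩
      obtain ⟨x', hx'1, hx'2⟩ := covering hV hr huW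
      rw [← hW] at hx'1 hx'2
      have hdisj : ∀ y ∈ comp G W x', y ∉ C := by
        intro y hy
        refine comp_disjoint (fun hx'C : x' ∈ comp G W x => ?_) hy
        have heq := comp_eq_of_mem hx'C
        rw [heq] at hx'2
        exact huC hx'2
      have hcompsub : comp G W x' ⊆ V \ S := by
        intro y hy
        refine Finset.mem_sdiff.2 ⟨(Finset.mem_erase.1 (comp_subset hy)).2, fun hyS => ?_⟩
        exact hdisj y hy (hSC hyS)
      have h1 : reachIn G (V \ S) u x' := by
        apply reachIn_mono hcompsub
        exact reachIn_symm (reachIn_comp_of_mem hx'2)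
      refine reachIn_trans h1 (reachIn_of_adj ?_ (hrVS S hSC) ?_)
      · exact hcompsub (self_mem_comp (Finset.mem_filter.1 hx'1).1)
      · exact ((Finset.mem_filter.1 hx'1).2).symm
    by_cases hCsmall : C.card ≤ Δ * k
    · refine ⟨C, le_trans hCW (le_refl _), connIn_comp, hxbig, hCsmall, ?_⟩
      have toR : ∀ u ∈ V \ C, reachIn G (V \ C) u r := by
        intro u hu
        by_cases hur : u = r
        · subst hur; exact reachIn_refl (hrVS C (le_refl _))
        · exact reach_out C (le_refl _) u hu (Finset.mem_sdiff.1 hu).2 hur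
      intro a ha b hb
      exact reachIn_trans (toR a ha) (reachIn_symm (toR b hb))
    · push_neg at hCsmall
      have hCcard : C.card ≤ N := by
        have := Finset.card_le_card hCW
        omega
      obtain ⟨S, hSsub, hSconn, hSk, hSΔk, hCSconn⟩ :=
        ih C hCcard connIn_comp x hxC hCsmall
      have hSC : S ⊆ C := le_trans hSsub (Finset.erase_subset _ _)
      have hxS : x ∉ S := fun h => (Finset.mem_erase.1 (hSsub h)).1 rfl
      refine ⟨S, ?_, hSconn, hSk, hSΔk, ?_⟩
      · exact le_trans hSC hCW
      · have toR : ∀ u ∈ V \ S, reachIn G (V \ S) u r := by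
          intro u hu
          by_cases hur : u = r
          · subst hur; exact reachIn_refl (hrVS S hSC)
          by_cases huC : u ∈ C
          · have h1 : reachIn G (C \ S) u x :=
              hCSconn u (Finset.mem_sdiff.2 ⟨huC, (Finset.mem_sdiff.1 hu).2⟩) x
                (Finset.mem_sdiff.2 ⟨hxC, hxS⟩)
            have hsub2 : C \ S ⊆ V \ S := by
              intro y hy
              have := Finset.mem_sdiff.1 hy
              exact Finset.mem_sdiff.2 ⟨(Finset.mem_erase.1 (hCW this.1)).2, this.2⟩
            refine reachIn_trans (reachIn_mono hsub2 h1) (reachIn_of_adj ?_ (hrVS S hSC) hadj_rx.symm)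
            exact hsub2 (Finset.mem_sdiff.2 ⟨hxC, hxS⟩)
          · exact reach_out S hSC u hu huC hur
        intro a ha b hb
        exact reachIn_trans (toR a ha) (reachIn_symm (toR b hb))

lemma mainSplit {Δ k : ℕ} (hΔ : 1 ≤ Δ) (hk : 1 ≤ k)
    (hdeg : ∀ v : Fin n, (G.neighborSet v).ncard ≤ Δ) :
    ∀ N : ℕ, ∀ V : Finset (Fin n), V.card ≤ N → ConnIn G V →
      ∃ L : List (Finset (Fin n)), L.Pairwise Disjoint ∧
        (∀ P ∈ L, P ⊆ V ∧ ConnIn G P ∧ k ≤ P.card ∧ P.card ≤ Δ * k) ∧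
        V.card ≤ Δ * k * L.length + (k - 1) := by
  intro N
  induction N with
  | zero =>
    intro V hV _
    refine ⟨[], List.Pairwise.nil, by simp, ?_⟩
    simp only [List.length_nil, Nat.mul_zero, Nat.zero_add]
    omega
  | succ N ih =>
    intro V hVN hV
    by_cases h1 : V.card ≤ k - 1
    · exact ⟨[], List.Pairwise.nil, by simp, by omega⟩
    by_cases h2 : V.card ≤ Δ * k
    · refine ⟨[V], List.pairwise_singleton _ _, ?_, ?_⟩
      · intro P hP
        rw [List.mem_singleton] at hP
        subst hP
        exact ⟨le_refl _, hV, by omega, h2⟩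
      · simp only [List.length_singleton, Nat.mul_one]; omega
    · push_neg at h2
      have hne : V.Nonempty := Finset.card_pos.1 (by omega)
      obtain ⟨r, hr⟩ := hne
      obtain ⟨S, hSsub, hSconn, hSk, hSΔk, hVSconn⟩ :=
        strongSplit hΔ hk hdeg (N+1) V hVN hV r hr (by omega)
      have hSV : S ⊆ V := le_trans hSsub (Finset.erase_subset _ _)
      have hVScard : (V \ S).card = V.card - S.card := Finset.card_sdiff_of_subset hSV
      have hrec : (V \ S).card ≤ N := by omega
      obtain ⟨L', hL'd, hL'p, hL'c⟩ := ih (V \ S) hrec hVSconn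
      refine ⟨S :: L', ?_, ?_, ?_⟩
      · refine List.Pairwise.cons ?_ hL'd
        intro P hP
        have := (hL'p P hP).1
        exact Finset.disjoint_left.2 fun a haS haP =>
          (Finset.mem_sdiff.1 (this haP)).2 haS
      · intro P hP
        rcases List.mem_cons.1 hP with h | h
        · subst h; exact ⟨hSV, hSconn, hSk, hSΔk⟩
        · obtain ⟨hs, hc, hk', hΔk'⟩ := hL'p P h
          exact ⟨le_trans hs Finset.sdiff_subset, hc, hk', hΔk'⟩
      · simp only [List.length_cons]
        have : V.card = S.card + (V \ S).card := by omega
        calc V.card = S.card + (V \ S).card := this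
        _ ≤ Δ * k + (Δ * k * L'.length + (k-1)) := by omega
        _ = Δ * k * (L'.length + 1) + (k - 1) := by ring



structure St (m : ℕ) where
  stk : List (Fin m)
  expl : Finset (Fin m)

variable {m : ℕ} (H : SimpleGraph (Fin m))

def Tset (st : St m) : Finset (Fin m) := Finset.univ \ (st.expl ∪ st.stk.toFinset)

noncomputable def dstep (st : St m) : St m :=
  if hstk : st.stk = [] then
    (if h : (Tset st).Nonempty then ⟨[h.choose], st.expl⟩ else st)
  else
    if h2 : ((Tset st).filter (H.Adj (st.stk.head hstk))).Nonempty then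
      ⟨h2.choose :: st.stk, st.expl⟩
    else ⟨st.stk.tail, insert (st.stk.head hstk) st.expl⟩

def Inv (st : St m) : Prop :=
  st.stk.Nodup ∧ (∀ v ∈ st.stk, v ∉ st.expl) ∧ st.stk.Chain' H.Adj ∧
  (∀ x ∈ st.expl, ∀ u ∈ Tset st, ¬ H.Adj x u)

def phi (st : St m) : ℕ := 2 * st.expl.card + st.stk.length

noncomputable def states (t : ℕ) : St m := (dstep H)^[t] ⟨[], ∅⟩

lemma mem_Tset {st : St m} {u : Fin m} :
    u ∈ Tset st ↔ u ∉ st.expl ∧ u ∉ st.stk := by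
  simp [Tset, List.mem_toFinset, not_or]

lemma halt_phi {st : St m} (hnd : st.stk.Nodup) (hdisj : ∀ v ∈ st.stk, v ∉ st.expl)
    (hstk : st.stk = []) (hT : ¬ (Tset st).Nonempty) : phi st = 2 * m := by
  have : st.expl = Finset.univ := by
    rw [Finset.not_nonempty_iff_eq_empty, Tset, Finset.sdiff_eq_empty_iff_subset] at hT
    apply Finset.eq_univ_of_forall
    intro x
    have := hT (Finset.mem_univ x)
    rw [Finset.mem_union, List.mem_toFinset, hstk] at this
    rcases this with h | h
    · exact h
    · cases h
  rw [phi, this, hstk]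
  simp [Finset.card_univ]

lemma dfs_induct : ∀ t : ℕ, Inv H (states H t) ∧
    (phi (states H t) = t ∨ (2 * m ≤ t ∧ phi (states H t) = 2 * m)) := by
  intro t
  induction t with
  | zero =>
    refine ⟨⟨List.nodup_nil, by simp [states], List.isChain_nil, ?_⟩, Or.inl rfl⟩
    intro x hx
    simp only [states, Function.iterate_zero, id] at hx
    exact absurd hx (Finset.notMem_empty x)
  | succ t ih =>
    obtain ⟨⟨hnd, hdisj, hch, hadj⟩, hphi⟩ := ih
    have hstates : states H (t+1) = dstep H (states H t) := Function.iterate_succ_apply' _ _ _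
    set st := states H t with hst
    by_cases hstk : st.stk = []
    · by_cases hT : (Tset st).Nonempty
      · have hdef : dstep H st = ⟨[hT.choose], st.expl⟩ := by
          rw [dstep, dif_pos hstk, dif_pos hT]
        have hcm : hT.choose ∈ Tset st := hT.choose_spec
        rw [mem_Tset] at hcm
        have hTnew : Tset (⟨[hT.choose], st.expl⟩ : St m) ⊆ Tset st := by
          intro u hu
          rw [mem_Tset] at hu ⊢
          refine ⟨hu.1, ?_⟩
          rw [hstk]
          exact List.not_mem_nil
        constructor
        · rw [hstates, hdef]
          refine ⟨List.nodup_singleton _, ?_, List.isChain_singleton _, ?_⟩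
          · intro v hv
            rw [List.mem_singleton] at hv
            subst hv
            exact hcm.1
          · intro x hx u hu
            exact hadj x hx u (hTnew hu)
        · left
          rw [hstates, hdef]
          have h1 : phi st = t := by
            rcases hphi with h | ⟨h1, h2⟩
            · exact h
            · exfalso
              -- phi st = 2m with empty stack means expl = univ, so Tset empty
              rw [phi, hstk, List.length_nil, add_zero] at h2
              have : st.expl = Finset.univ := by
                apply Finset.eq_univ_of_card
                have hcu : Fintype.card (Fin m) = m := Fintype.card_fin m
                omega
              obtain ⟨u, hu⟩ := hT
              rw [mem_Tset] at hu
              exact hu.1 (this ▸ Finset.mem_univ u)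
          rw [phi] at h1 ⊢
          rw [hstk] at h1
          simp only [List.length_nil, add_zero] at h1
          simp only [List.length_singleton]
          omega
      · have hdef : dstep H st = st := by rw [dstep, dif_pos hstk, dif_neg hT]
        refine ⟨by rw [hstates, hdef]; exact ⟨hnd, hdisj, hch, hadj⟩, Or.inr ?_⟩
        have hph : phi st = 2 * m := halt_phi hnd hdisj hstk hT
        constructor
        · rcases hphi with h | ⟨h1, _⟩
          · omega
          · omega
        · rw [hstates, hdef]; exact hph
    · set v := st.stk.head hstk with hv
      have hsplit : st.stk = v :: st.stk.tail := (List.cons_head_tail hstk).symm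
      by_cases h2 : ((Tset st).filter (H.Adj v)).Nonempty
      · have hdef : dstep H st = ⟨h2.choose :: st.stk, st.expl⟩ := by
          rw [dstep, dif_neg hstk, dif_pos h2]
        have hcm := h2.choose_spec
        rw [Finset.mem_filter] at hcm
        obtain ⟨hcT, hcadj⟩ := hcm
        rw [mem_Tset] at hcT
        have hphi1 : phi st = t := by
          rcases hphi with h | ⟨h1, h2'⟩
          · exact h
          · exfalso
            rw [phi] at h2'
            -- stack nonempty & expl card ≤ m... need contradiction: phi ≤ 2m with equality
            -- forces stack empty.  |expl| + |stk| ≤ m since disjoint.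
            have hcard : st.expl.card + st.stk.length ≤ m := by
              have hdisj2 : Disjoint st.expl st.stk.toFinset := by
                rw [Finset.disjoint_left]
                intro a ha ha2
                exact hdisj a (List.mem_toFinset.1 ha2) ha
              have := Finset.card_union_of_disjoint hdisj2
              have hle : (st.expl ∪ st.stk.toFinset).card ≤ m := by
                have := Finset.card_le_univ (st.expl ∪ st.stk.toFinset)
                simpa using this
              have hlen : st.stk.toFinset.card = st.stk.length := List.toFinset_card_of_nodup hnd
              omega
            have hpos : 0 < st.stk.length := by
              rw [hsplit]; simp
            omega
        constructor
        · rw [hstates, hdef]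
          refine ⟨?_, ?_, ?_, ?_⟩
          · exact List.Nodup.cons hcT.2 hnd
          · intro w hw
            rcases List.mem_cons.1 hw with h | h
            · subst h; exact hcT.1
            · exact hdisj w h
          · rw [hsplit]
            exact List.IsChain.cons_cons (hcadj.symm) (hsplit ▸ hch)
          · intro x hx u hu
            apply hadj x hx
            rw [mem_Tset] at hu ⊢
            refine ⟨hu.1, fun hmem => hu.2 (List.mem_cons_of_mem _ hmem)⟩
        · left
          rw [hstates, hdef, phi]
          simp only [List.length_cons]
          rw [phi] at hphi1
          omega
      · have hdef : dstep H st = ⟨st.stk.tail, insert v st.expl⟩ := by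
          rw [dstep, dif_neg hstk, dif_neg h2]
        have hvmem : v ∈ st.stk := by rw [hsplit]; exact List.mem_cons_self
        have hvexpl : v ∉ st.expl := hdisj v hvmem
        have hTeq : Tset (⟨st.stk.tail, insert v st.expl⟩ : St m) = Tset st := by
          rw [Tset, Tset]
          congr 1
          ext a
          simp only [Finset.mem_union, Finset.mem_insert, List.mem_toFinset]
          constructor
          · rintro ((h | h) | h)
            · subst h; right; exact hvmem
            · left; exact h
            · right; rw [hsplit]; exact List.mem_cons_of_mem _ h
          · rintro (h | h)
            · left; right; exact h
            · rw [hsplit, List.mem_cons] at h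
              rcases h with h | h
              · left; left; exact h
              · right; exact h
        have hphi1 : phi st = t := by
          rcases hphi with h | ⟨h1, h2'⟩
          · exact h
          · exfalso
            rw [phi] at h2'
            have hcard : st.expl.card + st.stk.length ≤ m := by
              have hdisj2 : Disjoint st.expl st.stk.toFinset := by
                rw [Finset.disjoint_left]
                intro a ha ha2
                exact hdisj a (List.mem_toFinset.1 ha2) ha
              have := Finset.card_union_of_disjoint hdisj2
              have hle : (st.expl ∪ st.stk.toFinset).card ≤ m := by
                have := Finset.card_le_univ (st.expl ∪ st.stk.toFinset)
                simpa using this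
              have hlen : st.stk.toFinset.card = st.stk.length := List.toFinset_card_of_nodup hnd
              omega
            have hpos : 0 < st.stk.length := by rw [hsplit]; simp
            omega
        constructor
        · rw [hstates, hdef]
          refine ⟨?_, ?_, ?_, ?_⟩
          · exact (hsplit ▸ hnd).of_cons
          · intro w hw
            have hwstk : w ∈ st.stk := by rw [hsplit]; exact List.mem_cons_of_mem _ hw
            have hwv : w ≠ v := by
              intro h
              subst h
              rw [hsplit] at hnd
              exact (List.nodup_cons.1 hnd).1 hw
            rw [Finset.mem_insert]
            push_neg
            exact ⟨hwv, hdisj w hwstk⟩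
          · exact (hsplit ▸ hch).tail
          · intro x hx u hu
            rw [hTeq] at hu
            rcases Finset.mem_insert.1 hx with h | h
            · subst h
              intro hadj2
              apply h2
              exact ⟨u, Finset.mem_filter.2 ⟨hu, hadj2⟩⟩
            · exact hadj x h u hu
        · left
          rw [hstates, hdef, phi]
          simp only [Finset.card_insert_of_notMem hvexpl]
          rw [phi] at hphi1
          rw [hsplit] at hphi1
          simp only [List.length_cons] at hphi1
          omega

lemma dfs_path {s : ℕ} (hm : 1 ≤ m) (hs : 1 ≤ s)
    (hexp : ∀ A B : Finset (Fin m), A.card = s → B.card = s → Disjoint A B →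
      ∃ i ∈ A, ∃ j ∈ B, H.Adj i j) :
    ∃ l : List (Fin m), l.Chain' H.Adj ∧ l.Nodup ∧ m + 2 ≤ l.length + 2 * s := by
  obtain ⟨⟨hnd, hdisj, hch, hadj⟩, hphi⟩ := dfs_induct H m
  set st := states H m with hst
  have hphim : phi st = m := by
    rcases hphi with h | ⟨h1, _⟩
    · exact h
    · omega
  have hcard : st.expl.card + st.stk.length + (Tset st).card = m := by
    have hdisj2 : Disjoint st.expl st.stk.toFinset := by
      rw [Finset.disjoint_left]
      intro a ha ha2
      exact hdisj a (List.mem_toFinset.1 ha2) ha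
    have h1 := Finset.card_union_of_disjoint hdisj2
    have hlen : st.stk.toFinset.card = st.stk.length := List.toFinset_card_of_nodup hnd
    have h2 : (Tset st).card = m - (st.expl ∪ st.stk.toFinset).card := by
      rw [Tset, Finset.card_sdiff_of_subset (Finset.subset_univ _)]
      simp [Finset.card_univ]
    have h3 : (st.expl ∪ st.stk.toFinset).card ≤ m := by
      have := Finset.card_le_univ (st.expl ∪ st.stk.toFinset)
      simpa using this
    omega
  have hexplT : st.expl.card = (Tset st).card := by
    rw [phi] at hphim
    omega
  have hexpl_small : st.expl.card ≤ s - 1 := by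
    by_contra hbig
    push_neg at hbig
    have hsle : s ≤ st.expl.card := by omega
    obtain ⟨A, hA, hAcard⟩ := Finset.exists_subset_card_eq hsle
    have hsle2 : s ≤ (Tset st).card := by omega
    obtain ⟨B, hB, hBcard⟩ := Finset.exists_subset_card_eq hsle2
    have hABdisj : Disjoint A B := by
      rw [Finset.disjoint_left]
      intro a haA haB
      have h1 := hA haA
      have h2 := mem_Tset.1 (hB haB)
      exact h2.1 h1
    obtain ⟨i, hiA, j, hjB, hij⟩ := hexp A B hAcard hBcard hABdisj
    exact hadj i (hA hiA) j (hB hjB) hij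
  refine ⟨st.stk, hch, hnd, ?_⟩
  rw [phi] at hphim
  omega


lemma isPath_append {V : Type*} {G : SimpleGraph V} {u v w : V}
    {p : G.Walk u v} {q : G.Walk v w} (hp : p.IsPath) (hq : q.IsPath)
    (h : ∀ a, a ∈ p.support → a ∈ q.support → a = v) : (p.append q).IsPath := by
  rw [SimpleGraph.Walk.isPath_def, SimpleGraph.Walk.support_append]
  apply List.Nodup.append hp.support_nodup hq.support_nodup.tail
  intro a ha ha2
  have hmem : a ∈ q.support := List.mem_of_mem_tail ha2
  have hav : a = v := h a ha hmem
  have hc : q.support = v :: q.support.tail := q.support_eq_cons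
  have hnd := hq.support_nodup
  rw [hc, List.nodup_cons] at hnd
  exact hnd.1 (hav ▸ ha2)

lemma support_mapLe {V : Type*} {G G' : SimpleGraph V} (h : G ≤ G') {u v : V}
    (p : G.Walk u v) : (p.mapLe h).support = p.support := by
  rw [SimpleGraph.Walk.mapLe, SimpleGraph.Walk.support_map]
  exact List.map_id' p.support

lemma assemble {n m : ℕ} {G R : SimpleGraph (Fin n)} {P : Fin m → Finset (Fin n)}
    {H : SimpleGraph (Fin m)}
    (hdisj : ∀ i j : Fin m, i ≠ j → Disjoint (P i) (P j))
    (hconn : ∀ i, ConnIn G (P i))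
    (hH : ∀ i j, H.Adj i j → ∃ x ∈ P i, ∃ y ∈ P j, R.Adj x y) :
    ∀ (l : List (Fin m)) (i : Fin m) (b : Fin n), (i :: l).Chain' H.Adj →
      (i :: l).Nodup → b ∈ P i →
      ∃ (u : Fin n) (w : (G ⊔ R).Walk b u), w.IsPath ∧ l.length ≤ w.length ∧
        ∀ x ∈ w.support, ∃ j ∈ (i :: l), x ∈ P j := by
  intro l
  induction l with
  | nil =>
    intro i b _ _ hb
    exact ⟨b, SimpleGraph.Walk.nil, SimpleGraph.Walk.IsPath.nil, by simp,
      fun x hx => ⟨i, List.mem_singleton_self _, by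
        simp only [SimpleGraph.Walk.support_nil, List.mem_singleton] at hx
        subst hx; exact hb⟩⟩
  | cons j l' ih =>
    intro i b hch hnd hb
    have hadj : H.Adj i j := (List.isChain_cons_cons.1 hch).1
    obtain ⟨x, hxPi, y, hyPj, hxy⟩ := hH i j hadj
    obtain ⟨u, w', hw'path, hw'len, hw'sup⟩ :=
      ih j y (List.isChain_cons_cons.1 hch).2 (List.nodup_cons.1 hnd).2 hyPj
    have hinotin : i ∉ j :: l' := (List.nodup_cons.1 hnd).1
    -- piece path from b to x inside P i
    obtain ⟨pw, hpw⟩ := hconn i b hb x hxPi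
    set q0 : G.Walk b x := (pw.toPath : G.Walk b x) with hq0
    have hq0path : q0.IsPath := pw.toPath.2
    have hq0sup : ∀ a ∈ q0.support, a ∈ P i := fun a ha =>
      hpw a (SimpleGraph.Walk.support_toPath_subset pw ha)
    set q : (G ⊔ R).Walk b x := q0.mapLe le_sup_left with hq
    have hqpath : q.IsPath := SimpleGraph.Walk.IsPath.mapLe le_sup_left hq0path
    have hqsup : ∀ a ∈ q.support, a ∈ P i := by
      intro a ha
      rw [hq, support_mapLe] at ha
      exact hq0sup a ha
    have hxyadj : (G ⊔ R).Adj x y := by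
      rw [SimpleGraph.sup_adj]
      exact Or.inr hxy
    have hw'notPi : ∀ a ∈ w'.support, a ∉ P i := by
      intro a ha haPi
      obtain ⟨t, htl, haPt⟩ := hw'sup a ha
      have hti : t ≠ i := fun h => hinotin (h ▸ htl)
      exact Finset.disjoint_left.1 (hdisj t i hti) haPt haPi
    set e : (G ⊔ R).Walk x u := SimpleGraph.Walk.cons hxyadj w' with he
    have hepath : e.IsPath := by
      rw [he, SimpleGraph.Walk.cons_isPath_iff]
      exact ⟨hw'path, fun hmem => hw'notPi x hmem hxPi⟩
    refine ⟨u, q.append e, ?_, ?_, ?_⟩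
    · apply isPath_append hqpath hepath
      intro a ha ha2
      have haPi := hqsup a ha
      rw [he, SimpleGraph.Walk.support_cons, List.mem_cons] at ha2
      rcases ha2 with h | h
      · exact h
      · exact absurd haPi (hw'notPi a h)
    · rw [SimpleGraph.Walk.length_append, he, SimpleGraph.Walk.length_cons]
      simp only [List.length_cons]
      omega
    · intro a ha
      rw [SimpleGraph.Walk.mem_support_append_iff] at ha
      rcases ha with ha | ha
      · exact ⟨i, List.mem_cons_self, hqsup a ha⟩
      · rw [he, SimpleGraph.Walk.support_cons, List.mem_cons] at ha
        rcases ha with ha | ha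
        · subst ha; exact ⟨i, List.mem_cons_self, hxPi⟩
        · obtain ⟨t, htl, haPt⟩ := hw'sup a ha
          exact ⟨t, List.mem_cons_of_mem _ htl, haPt⟩


lemma cross_prob {n : ℕ} {p : ℝ} (h0 : 0 ≤ p) (h1 : p ≤ 1)
    {A' B' : Finset (Fin n)} (hd : Disjoint A' B') :
    erProb n p {R | ∀ a ∈ A', ∀ b ∈ B', ¬ R.Adj a b} ≤ (1 - p) ^ (A'.card * B'.card) := by
  set F : Finset (Sym2 (Fin n)) := (A' ×ˢ B').image (fun q => s(q.1, q.2)) with hF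
  have hinj : Set.InjOn (fun q : Fin n × Fin n => s(q.1, q.2)) ↑(A' ×ˢ B') := by
    intro q1 hq1 q2 hq2 heq
    simp only [Finset.coe_product, Set.mem_prod, Finset.mem_coe] at hq1 hq2
    simp only [Sym2.eq_iff] at heq
    rcases heq with ⟨h1, h2⟩ | ⟨h1, h2⟩
    · exact Prod.ext h1 h2
    · exfalso
      exact Finset.disjoint_left.1 hd hq1.1 (h1 ▸ hq2.2)
  have hcard : F.card = A'.card * B'.card := by
    rw [hF, Finset.card_image_of_injOn hinj, Finset.card_product]
  have hFU : F ⊆ U n := by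
    intro e he
    rw [hF, Finset.mem_image] at he
    obtain ⟨⟨a, b⟩, hab, rfl⟩ := he
    rw [Finset.mem_product] at hab
    have hne : a ≠ b := fun h => Finset.disjoint_left.1 hd hab.1 (h ▸ hab.2)
    simp only [U, Finset.mem_filter, Finset.mem_univ, true_and, Sym2.isDiag_iff_proj_eq]
    exact hne
  have hset : {R : SimpleGraph (Fin n) | ∀ a ∈ A', ∀ b ∈ B', ¬ R.Adj a b}
      = {R | ∀ e ∈ F, e ∉ R.edgeSet} := by
    ext R
    simp only [Set.mem_setOf_eq]
    constructor
    · intro h e he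
      rw [hF, Finset.mem_image] at he
      obtain ⟨⟨a, b⟩, hab, rfl⟩ := he
      rw [Finset.mem_product] at hab
      exact fun hmem => h a hab.1 b hab.2 ((SimpleGraph.mem_edgeSet R).1 hmem)
    · intro h a ha b hb hadj
      have hmem : s(a, b) ∈ F := by
        rw [hF, Finset.mem_image]
        exact ⟨(a, b), Finset.mem_product.2 ⟨ha, hb⟩, rfl⟩
      exact h _ hmem ((SimpleGraph.mem_edgeSet R).2 hadj)
  rw [hset, ← hcard]
  exact erProb_avoid h0 h1 hFU

lemma biUnion_card_ge {m n k s : ℕ} {P : Fin m → Finset (Fin n)} {A : Finset (Fin m)}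
    (hdisj : ∀ i j : Fin m, i ≠ j → Disjoint (P i) (P j))
    (hk : ∀ i, k ≤ (P i).card) (hA : A.card = s) :
    s * k ≤ (A.biUnion P).card := by
  rw [Finset.card_biUnion (fun i _ j _ hij => hdisj i j hij)]
  calc s * k = A.card * k := by rw [hA]
  _ ≤ ∑ i ∈ A, (P i).card := by
      rw [← smul_eq_mul]
      exact Finset.card_nsmul_le_sum A _ k (fun i _ => hk i)

lemma erProb_empty {n : ℕ} (p : ℝ) : erProb n p (∅ : Set (SimpleGraph (Fin n))) = 0 := by
  simp [erProb]

lemma numeric_bound {ε η : ℝ} {Δ k m s n : ℕ} {M : ℝ}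
    (hε : 0 < ε) (hη : 0 < η)
    (hlog4 : 0 < Real.log 4 + 1) (hΔR : 1 ≤ (Δ:ℝ)) (hkR : 1 ≤ (k:ℝ)) (hmR : 1 ≤ (m:ℝ))
    (hεk : 32 * (Δ:ℝ) * (Real.log 4 + 1) ≤ ε * k)
    (hn0R : (0:ℝ) < n) (hεn : ε ≤ n)
    (hn2Dkm : (n:ℝ) ≤ 2 * Δ * k * m)
    (hs4 : (m:ℝ) ≤ 4 * s)
    (hM : 2 * (Δ:ℝ) * k * (M + 1) ≤ n) (hMlog : Real.log (1/η) ≤ M) :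
    (2:ℝ)^m * 2^m * (1 - ε/n) ^ (s * k * (s * k)) ≤ η := by
  set pp : ℝ := ε / n with hppdef
  have hpp0 : 0 ≤ pp := le_of_lt (div_pos hε hn0R)
  have hpp1 : pp ≤ 1 := by
    rw [hppdef, div_le_one hn0R]
    exact hεn
  have hXR : ((s * k * (s * k) : ℕ) : ℝ) = ((s:ℝ) * k)^2 := by push_cast; ring
  have h1mp : (0:ℝ) ≤ 1 - pp := by linarith
  have hexp1 : (1 - pp) ≤ Real.exp (-pp) := by
    have := Real.add_one_le_exp (-pp)
    linarith
  have hstep1 : (1 - pp) ^ (s * k * (s * k)) ≤ Real.exp (-pp) ^ (s * k * (s * k)) :=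
    pow_le_pow_left₀ h1mp hexp1 _
  have hstep2 : Real.exp (-pp) ^ (s * k * (s * k))
      = Real.exp (-(pp * ((s * k * (s * k) : ℕ) : ℝ))) := by
    rw [← Real.exp_nat_mul]
    congr 1
    ring
  have h4 : (2:ℝ)^m * 2^m = Real.exp ((m:ℝ) * Real.log 4) := by
    rw [Real.exp_nat_mul, Real.exp_log (by norm_num : (0:ℝ) < 4), ← mul_pow]
    norm_num
  have hmk0 : (0:ℝ) ≤ (m:ℝ) * k := by positivity
  have hsk0 : (0:ℝ) ≤ (s:ℝ) * k := by positivity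
  have hsk : (m:ℝ) * k ≤ 4 * ((s:ℝ) * k) := by nlinarith
  have hNlow : ((m:ℝ) * k)^2 ≤ 16 * ((s:ℝ) * k)^2 := by nlinarith
  have key : (m:ℝ) * (Real.log 4 + 1) ≤ pp * ((s * k * (s * k) : ℕ) : ℝ) := by
    rw [hXR, hppdef, div_mul_eq_mul_div, le_div_iff₀ hn0R]
    have e1 : (m:ℝ) * (Real.log 4 + 1) * n
        ≤ (m:ℝ) * (Real.log 4 + 1) * (2 * Δ * k * m) :=
      mul_le_mul_of_nonneg_left hn2Dkm
        (mul_nonneg (Nat.cast_nonneg m) (le_of_lt hlog4))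
    have e2 : (32 * (Δ:ℝ) * (Real.log 4 + 1)) * ((m:ℝ)^2 * k)
        ≤ (ε * k) * ((m:ℝ)^2 * k) :=
      mul_le_mul_of_nonneg_right hεk (by positivity)
    have c1 : ε * (((m:ℝ) * k)^2) ≤ ε * (16 * ((s:ℝ) * k)^2) :=
      mul_le_mul_of_nonneg_left hNlow (le_of_lt hε)
    linarith [e1, e2, c1]
  have hfinal1 : (m:ℝ) * Real.log 4 + -(pp * ((s * k * (s * k) : ℕ) : ℝ)) ≤ -(m:ℝ) := by
    linarith
  have hm_big : M + 1 ≤ (m:ℝ) := by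
    have h1 : 2 * (Δ:ℝ) * k * (M + 1) ≤ 2 * (Δ:ℝ) * k * m := by linarith
    have h2 : (0:ℝ) < 2 * (Δ:ℝ) * k := by positivity
    exact le_of_mul_le_mul_left h1 h2
  have hexpm : Real.exp (-(m:ℝ)) ≤ η := by
    rw [one_div, Real.log_inv] at hMlog
    have h2 : -(m:ℝ) ≤ Real.log η := by linarith
    calc Real.exp (-(m:ℝ)) ≤ Real.exp (Real.log η) := Real.exp_le_exp.2 h2
    _ = η := Real.exp_log hη
  calc (2:ℝ)^m * 2^m * (1 - pp) ^ (s * k * (s * k))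
      ≤ (2:ℝ)^m * 2^m * Real.exp (-(pp * ((s * k * (s * k) : ℕ) : ℝ))) := by
        apply mul_le_mul_of_nonneg_left _ (by positivity)
        rw [← hstep2]
        exact hstep1
    _ = Real.exp ((m:ℝ) * Real.log 4 + -(pp * ((s * k * (s * k) : ℕ) : ℝ))) := by
        rw [Real.exp_add, ← h4]
    _ ≤ Real.exp (-(m:ℝ)) := Real.exp_le_exp.2 hfinal1
    _ ≤ η := hexpm

end LPP

set_option maxHeartbeats 1000000 in
/-- Theorem 6 (long paths in randomly perturbed connected bounded-degree graphs):
a.a.s. `G ∪ R` contains a path with at least `c·n` edges. -/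
theorem long_path_in_perturbed_connected :
    ∀ ε : ℝ, 0 < ε → ∀ Δ : ℕ, 1 ≤ Δ → ∃ c : ℝ, 0 < c ∧
      ∀ η : ℝ, 0 < η → ∃ n₀ : ℕ, ∀ n : ℕ, n₀ ≤ n →
        ∀ G : SimpleGraph (Fin n), G.Connected →
          (∀ v : Fin n, (G.neighborSet v).ncard ≤ Δ) →
          1 - η ≤ erProb n (ε / n)
            {R | ∃ (u v : Fin n) (p : (G ⊔ R).Walk u v),
                p.IsPath ∧ c * n ≤ (p.length : ℝ)} := by
  classical
  intro ε hε Δ hΔ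
  set k : ℕ := ⌈(32 * Δ * (Real.log 4 + 1)) / ε⌉₊ + 1 with hkdef
  have hk1 : 1 ≤ k := Nat.le_add_left 1 _
  have hΔR : (1:ℝ) ≤ (Δ:ℝ) := by exact_mod_cast hΔ
  have hkR : (1:ℝ) ≤ (k:ℝ) := by exact_mod_cast hk1
  have hlog4 : (0:ℝ) < Real.log 4 + 1 := by
    have : (0:ℝ) < Real.log 4 := Real.log_pos (by norm_num)
    linarith
  have hkbig : 32 * (Δ:ℝ) * (Real.log 4 + 1) / ε ≤ (k:ℝ) := by
    refine le_trans (Nat.le_ceil _) ?_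
    push_cast [hkdef]
    linarith
  have hεk : 32 * (Δ:ℝ) * (Real.log 4 + 1) ≤ ε * k := by
    rw [div_le_iff₀ hε] at hkbig
    linarith [hkbig]
  have hDk0 : (0:ℝ) < (Δ:ℝ) * k := by nlinarith
  refine ⟨1 / (8 * Δ * k), by positivity, ?_⟩
  intro η hη
  set M : ℝ := max 0 (Real.log (1 / η)) with hMdef
  have hM0 : 0 ≤ M := le_max_left _ _
  set B : ℝ := 2 * Δ * k * (M + 1) + 8 * Δ * k + 8 * k + ε + 8 with hBdef
  have hB0 : 0 ≤ B := by positivity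
  refine ⟨⌈B⌉₊ + 1, ?_⟩
  intro n hn G hGc hGdeg
  have hnB : B + 1 ≤ (n : ℝ) := by
    have h1 : B ≤ (⌈B⌉₊ : ℝ) := Nat.le_ceil B
    have h2 : ((⌈B⌉₊ + 1 : ℕ) : ℝ) ≤ (n : ℝ) := by exact_mod_cast hn
    push_cast at h2
    linarith
  have hn0R : (0:ℝ) < n := by nlinarith
  have hn0 : 1 ≤ n := by omega
  have hknR : (k:ℝ) ≤ n := by nlinarith
  have hkn : k ≤ n := by exact_mod_cast hknR
  have hεn : ε ≤ n := by nlinarith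
  set pp := ε / (n:ℝ) with hppdef
  have hpp0 : 0 ≤ pp := le_of_lt (div_pos hε hn0R)
  have hpp1 : pp ≤ 1 := (div_le_one hn0R).2 hεn
  -- split into pieces
  have hconnuniv : LPP.ConnIn G Finset.univ := by
    intro a _ b _
    obtain ⟨w⟩ := hGc.preconnected a b
    exact ⟨w, fun x _ => Finset.mem_univ x⟩
  obtain ⟨L, hLd, hLp, hLc⟩ := LPP.mainSplit hΔ hk1 hGdeg n Finset.univ (by simp) hconnuniv
  set m := L.length with hmdef
  have hLc' : n ≤ Δ * k * m + (k - 1) := by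
    have : (Finset.univ : Finset (Fin n)).card = n := by simp
    omega
  have hm1 : 1 ≤ m := by
    rcases Nat.eq_zero_or_pos m with h | h
    · rw [h] at hLc'; omega
    · exact h
  have hmR : (1:ℝ) ≤ m := by exact_mod_cast hm1
  have hnm : (n:ℝ) ≤ Δ * k * m + k := by
    have h1 : n ≤ Δ * k * m + k := by omega
    exact_mod_cast h1
  have hn2Dkm : (n:ℝ) ≤ 2 * Δ * k * m := by nlinarith
  set P : Fin m → Finset (Fin n) := fun i => L.get i with hPdef
  have hPdisj : ∀ i j : Fin m, i ≠ j → Disjoint (P i) (P j) := by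
    intro i j hij
    rcases lt_or_gt_of_ne hij with h | h
    · exact List.pairwise_iff_get.1 hLd i j h
    · exact (List.pairwise_iff_get.1 hLd j i h).symm
  have hPmem : ∀ i : Fin m, P i ∈ L := fun i => List.get_mem L i
  have hPconn : ∀ i, LPP.ConnIn G (P i) := fun i => (hLp _ (hPmem i)).2.1
  have hPk : ∀ i, k ≤ (P i).card := fun i => (hLp _ (hPmem i)).2.2.1
  set s : ℕ := m / 4 + 1 with hsdef
  have hs1 : 1 ≤ s := Nat.le_add_left 1 _
  have hs4 : (m:ℝ) ≤ 4 * s := by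
    have h1 : m ≤ 4 * s := by omega
    exact_mod_cast h1
  have hsR : (s:ℝ) ≤ (m:ℝ)/4 + 1 := by
    have h1 : ((m/4 : ℕ) : ℝ) ≤ (m:ℝ)/4 := by
      have h2 := Nat.cast_div_le (α := ℝ) (m := m) (n := 4)
      simpa using h2
    rw [hsdef]
    push_cast
    linarith
  set 𝒢 : Set (SimpleGraph (Fin n)) := {R | ∀ Aa Bb : Finset (Fin m), Aa.card = s →
    Bb.card = s → Disjoint Aa Bb →
    ∃ i ∈ Aa, ∃ j ∈ Bb, ∃ x ∈ P i, ∃ y ∈ P j, R.Adj x y} with h𝒢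
  -- Claim 1: good graphs have long paths
  have claim1 : 𝒢 ⊆ {R | ∃ (u v : Fin n) (p : (G ⊔ R).Walk u v),
      p.IsPath ∧ 1 / (8 * (Δ:ℝ) * (k:ℝ)) * n ≤ (p.length : ℝ)} := by
    intro R hR
    rw [h𝒢, Set.mem_setOf_eq] at hR
    set Hgr := SimpleGraph.fromRel (fun i j => ∃ x ∈ P i, ∃ y ∈ P j, R.Adj x y) with hHgr
    have hexp : ∀ Aa Bb : Finset (Fin m), Aa.card = s → Bb.card = s → Disjoint Aa Bb →
        ∃ i ∈ Aa, ∃ j ∈ Bb, Hgr.Adj i j := by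
      intro Aa Bb hA hB hd
      obtain ⟨i, hi, j, hj, x, hx, y, hy, hadj⟩ := hR Aa Bb hA hB hd
      have hij : i ≠ j := fun h => Finset.disjoint_left.1 hd hi (h ▸ hj)
      refine ⟨i, hi, j, hj, ?_⟩
      rw [hHgr, SimpleGraph.fromRel_adj]
      exact ⟨hij, Or.inl ⟨x, hx, y, hy, hadj⟩⟩
    obtain ⟨l, hlch, hlnd, hllen⟩ := LPP.dfs_path Hgr hm1 hs1 hexp
    have hlne : l ≠ [] := by
      intro h
      rw [h] at hllen
      simp only [List.length_nil, Nat.zero_add] at hllen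
      omega
    obtain ⟨i, l', rfl⟩ := List.exists_cons_of_ne_nil hlne
    have hbne : (P i).Nonempty := Finset.card_pos.1 (lt_of_lt_of_le (by omega) (hPk i))
    obtain ⟨b, hb⟩ := hbne
    have hH' : ∀ i' j', Hgr.Adj i' j' → ∃ x ∈ P i', ∃ y ∈ P j', R.Adj x y := by
      intro i' j' hadj
      rw [hHgr, SimpleGraph.fromRel_adj] at hadj
      rcases hadj.2 with h | h
      · exact h
      · obtain ⟨x, hx, y, hy, hxy⟩ := h
        exact ⟨y, hy, x, hx, hxy.symm⟩
    obtain ⟨u, w, hwp, hwlen, _⟩ := LPP.assemble hPdisj hPconn hH' l' i b hlch hlnd hb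
    refine ⟨b, u, w, hwp, ?_⟩
    have hwR : (l'.length : ℝ) ≤ (w.length : ℝ) := by exact_mod_cast hwlen
    have h1R : (m:ℝ) + 2 ≤ ((l'.length : ℝ) + 1) + 2 * s := by
      have := hllen
      simp only [List.length_cons] at this
      exact_mod_cast this
    have hc : (m:ℝ)/2 - 1 ≤ (w.length : ℝ) := by linarith
    have hn8 : 8 * (Δ:ℝ) * k ≤ n := by
      rw [hBdef] at hnB
      nlinarith
    rw [div_mul_eq_mul_div, one_mul, div_le_iff₀ (by positivity)]
    nlinarith [mul_le_mul_of_nonneg_left hc (by positivity : (0:ℝ) ≤ 8 * (Δ:ℝ) * k)]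
  -- Claim 2: the good event is likely
  have hM2 : 2 * (Δ:ℝ) * k * (M + 1) ≤ n := by
    rw [hBdef] at hnB
    linarith only [hnB, hDk0, hkR, hε, hM0]
  have claim2 : erProb n pp 𝒢ᶜ ≤ η := by
    set E : Finset (Fin m) × Finset (Fin m) → Set (SimpleGraph (Fin n)) := fun q =>
      {R | q.1.card = s ∧ q.2.card = s ∧ Disjoint q.1 q.2 ∧
        ∀ a ∈ q.1.biUnion P, ∀ b ∈ q.2.biUnion P, ¬ R.Adj a b} with hE
    have hsub : 𝒢ᶜ ⊆ {R | ∃ q ∈ (Finset.univ : Finset (Finset (Fin m) × Finset (Fin m))),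
        R ∈ E q} := by
      intro R hR
      rw [Set.mem_compl_iff, h𝒢, Set.mem_setOf_eq] at hR
      push_neg at hR
      obtain ⟨Aa, Bb, hA, hB, hd, hno⟩ := hR
      refine ⟨(Aa, Bb), Finset.mem_univ _, hA, hB, hd, ?_⟩
      intro a ha b hb hadj
      rw [Finset.mem_biUnion] at ha hb
      obtain ⟨i, hi, hai⟩ := ha
      obtain ⟨j, hj, hbj⟩ := hb
      exact hno i hi j hj a hai b hbj hadj
    have hperq : ∀ q : Finset (Fin m) × Finset (Fin m),
        erProb n pp (E q) ≤ (1 - pp) ^ (s * k * (s * k)) := by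
      intro q
      by_cases hq : q.1.card = s ∧ q.2.card = s ∧ Disjoint q.1 q.2
      · have hA'B' : Disjoint (q.1.biUnion P) (q.2.biUnion P) := by
          rw [Finset.disjoint_left]
          intro a ha ha2
          rw [Finset.mem_biUnion] at ha ha2
          obtain ⟨i, hi, hai⟩ := ha
          obtain ⟨j, hj, haj⟩ := ha2
          have hij : i ≠ j := fun h => Finset.disjoint_left.1 hq.2.2 hi (h ▸ hj)
          exact Finset.disjoint_left.1 (hPdisj i j hij) hai haj
        have h1 : E q ⊆ {R | ∀ a ∈ q.1.biUnion P, ∀ b ∈ q.2.biUnion P, ¬ R.Adj a b} :=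
          fun R hR => hR.2.2.2
        refine le_trans (LPP.erProb_mono hpp0 hpp1 h1)
          (le_trans (LPP.cross_prob hpp0 hpp1 hA'B') ?_)
        apply pow_le_pow_of_le_one (by linarith) (by linarith)
        exact Nat.mul_le_mul (LPP.biUnion_card_ge hPdisj hPk hq.1)
          (LPP.biUnion_card_ge hPdisj hPk hq.2.1)
      · have hEq : E q = ∅ := by
          rw [Set.eq_empty_iff_forall_notMem]
          intro R hR
          exact hq ⟨hR.1, hR.2.1, hR.2.2.1⟩
        rw [hEq, LPP.erProb_empty]
        apply pow_nonneg
        linarith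
    have hcardQ : (Fintype.card (Finset (Fin m) × Finset (Fin m)) : ℝ) = 2^m * 2^m := by
      rw [Fintype.card_prod, Fintype.card_finset, Fintype.card_fin]
      push_cast
      ring
    calc erProb n pp 𝒢ᶜ
        ≤ erProb n pp {R | ∃ q ∈ (Finset.univ : Finset (Finset (Fin m) × Finset (Fin m))),
            R ∈ E q} := LPP.erProb_mono hpp0 hpp1 hsub
      _ ≤ ∑ q ∈ (Finset.univ : Finset (Finset (Fin m) × Finset (Fin m))), erProb n pp (E q) :=
          LPP.erProb_union_le hpp0 hpp1 _ _
      _ ≤ ∑ _q ∈ (Finset.univ : Finset (Finset (Fin m) × Finset (Fin m))),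
            (1 - pp) ^ (s * k * (s * k)) := Finset.sum_le_sum (fun q _ => hperq q)
      _ = (2:ℝ)^m * 2^m * (1 - pp) ^ (s * k * (s * k)) := by
          rw [Finset.sum_const, Finset.card_univ, nsmul_eq_mul, hcardQ]
      _ ≤ η := LPP.numeric_bound hε hη hlog4 hΔR hkR hmR hεk hn0R hεn hn2Dkm hs4
          hM2 (le_max_right _ _)
  -- conclusion
  have hcompl := LPP.erProb_compl (n := n) pp 𝒢
  have hmono := LPP.erProb_mono hpp0 hpp1 claim1
  have : 1 - η ≤ erProb n pp 𝒢 := by linarith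
  exact le_trans this hmono
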